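/- Chebyshev's inequality for tensors: Let A be a deterministic positive definite d×d complex matrix and let X be a random Hermitian d×d matrix such that X² has integrable entries. Then ℙ(X ⋠ A) ≤ Tr(𝔼[X²]·A^{−2}). -/

import Mathlib

open MeasureTheory
open scoped ComplexOrder

noncomputable section

/-- `d × d` complex matrices: the model for square tensors
`ℂ^{I_1×⋯×I_N×I_1×⋯×I_N}` under the Einstein product, with `d = ∏ I_j`. -/
abbrev Mat (d : ℕ) := Matrix (Fin d) (Fin d) ℂ

/-- Continuous functional calculus: apply `f : ℝ → ℝ` to the eigenvalues of a
(Hermitian) matrix. -/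
noncomputable def mfun {d : ℕ} (f : ℝ → ℝ) (A : Mat d) : Mat d := cfc f A

/-- Real matrix power `A^r` via the continuous functional calculus. -/
noncomputable def mpow {d : ℕ} (A : Mat d) (r : ℝ) : Mat d :=
  cfc (fun x : ℝ => x ^ r) A

/-- The positive semidefinite absolute value `|A| = (A²)^{1/2}` of a Hermitian
matrix, obtained by applying `|·|` to the eigenvalues. -/
noncomputable def matAbs {d : ℕ} (A : Mat d) : Mat d := mfun (fun x => |x|) A

/-- Largest eigenvalue of a Hermitian matrix (junk value `0` otherwise). -/
noncomputable def eigMax {d : ℕ} (A : Mat d) : ℝ :=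
  if h : A.IsHermitian then ⨆ i, h.eigenvalues i else 0

/-- Smallest eigenvalue of a Hermitian matrix (junk value `0` otherwise). -/
noncomputable def eigMin {d : ℕ} (A : Mat d) : ℝ :=
  if h : A.IsHermitian then ⨅ i, h.eigenvalues i else 0

/-- The `i`-th largest eigenvalue (`0`-indexed, so `eigDesc A 0 = λ₁(A)` is the
largest) of a Hermitian matrix; junk value `0` otherwise. -/
noncomputable def eigDesc {d : ℕ} (A : Mat d) (i : ℕ) : ℝ :=
  if h : i < d ∧ A.IsHermitian then
    (h.2.eigenvalues ∘ Tuple.sort h.2.eigenvalues) (Fin.rev ⟨i, h.1⟩) else 0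

/-- Operator perspective `X #_f Y = X^{1/2} · f(X^{-1/2} Y X^{-1/2}) · X^{1/2}`. -/
noncomputable def persp {d : ℕ} (f : ℝ → ℝ) (X Y : Mat d) : Mat d :=
  mpow X (1/2) * mfun f (mpow X (-(1/2)) * Y * mpow X (-(1/2))) * mpow X (1/2)

/-- `TMI¹` : positive continuous functions on `(0,∞)` with `f 1 = 1` that are
tensor (matrix, in dimension `d`) monotone increasing. -/
def TMI1 (d : ℕ) (f : ℝ → ℝ) : Prop :=
  ContinuousOn f (Set.Ioi 0) ∧ (∀ x > 0, 0 < f x) ∧ f 1 = 1 ∧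
    ∀ A B : Mat d, A.PosDef → B.PosDef → (A - B).PosSemidef →
      (mfun f A - mfun f B).PosSemidef

/-- `TMD¹` : positive continuous functions on `(0,∞)` with `h 1 = 1` that are
tensor (matrix, in dimension `d`) monotone decreasing. -/
def TMD1 (d : ℕ) (h : ℝ → ℝ) : Prop :=
  ContinuousOn h (Set.Ioi 0) ∧ (∀ x > 0, 0 < h x) ∧ h 1 = 1 ∧
    ∀ A B : Mat d, A.PosDef → B.PosDef → (A - B).PosSemidef →
      (mfun h B - mfun h A).PosSemidef

/-- `TC¹` : positive continuous functions on `(0,∞)` with `g 1 = 1` that are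
tensor (matrix, in dimension `d`) convex. -/
def TC1 (d : ℕ) (g : ℝ → ℝ) : Prop :=
  ContinuousOn g (Set.Ioi 0) ∧ (∀ x > 0, 0 < g x) ∧ g 1 = 1 ∧
    ∀ A B : Mat d, A.PosDef → B.PosDef → ∀ t : ℝ, 0 ≤ t → t ≤ 1 →
      ((t • mfun g A + (1 - t) • mfun g B) - mfun g (t • A + (1 - t) • B)).PosSemidef

/-- `Z_j := X^{-2^{j-1}} · Y^{2^j} · X^{-2^{j-1}}` (so `Z_0 = X^{-1/2} Y X^{-1/2}`);
this is `Z_{k-1}` of the paper for `k = j+1`. -/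
noncomputable def Zmat {d : ℕ} (X Y : Mat d) (j : ℕ) : Mat d :=
  mpow X (-((2 : ℝ) ^ ((j : ℝ) - 1))) * mpow Y ((2 : ℝ) ^ (j : ℝ)) *
    mpow X (-((2 : ℝ) ^ ((j : ℝ) - 1)))

/-- `Ψ_lower(q,f,X,Y)` for `q = 2ⁿ·q₀`. -/
noncomputable def PsiLower {d : ℕ} (q0 : ℝ) (n : ℕ) (f : ℝ → ℝ) (X Y : Mat d) : ℝ :=
  eigMin (mpow (mfun f (Zmat X Y n)) (-q0) * mfun f (mpow (Zmat X Y n) q0)) *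
    ∏ k ∈ Finset.range n,
      eigMin (mpow (mfun f (Zmat X Y k)) (-2) * mfun f (mpow (Zmat X Y k) 2))

/-- `Ψ_upper(q,f,X,Y)` for `q = 2ⁿ·q₀`. -/
noncomputable def PsiUpper {d : ℕ} (q0 : ℝ) (n : ℕ) (f : ℝ → ℝ) (X Y : Mat d) : ℝ :=
  eigMax (mpow (mfun f (Zmat X Y n)) (-q0) * mfun f (mpow (Zmat X Y n) q0)) *
    ∏ k ∈ Finset.range n,
      eigMax (mpow (mfun f (Zmat X Y k)) (-2) * mfun f (mpow (Zmat X Y k) 2))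

/-- The Kantorovich constant `K(m, M, p)`. -/
noncomputable def Kconst (m M p : ℝ) : ℝ :=
  ((p - 1) * (M ^ p - m ^ p) / (p * (m * M ^ p - M * m ^ p))) ^ p *
    (m * M ^ p - M * m ^ p) / ((p - 1) * (M - m))

/-- The Kantorovich constant, interpreted as `1` when `p = 1` or `m = M`. -/
noncomputable def Kc (m M p : ℝ) : ℝ := if p = 1 ∨ m = M then 1 else Kconst m M p

/-- `ψ(q, f, Z) = max( f(λ_min(Z)^q)/f(λ_min(Z))^q , f(λ_max(Z)^q)/f(λ_max(Z))^q )`. -/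
noncomputable def psiRatio {d : ℕ} (q : ℝ) (f : ℝ → ℝ) (Z : Mat d) : ℝ :=
  max (f (eigMin Z ^ q) / f (eigMin Z) ^ q) (f (eigMax Z ^ q) / f (eigMax Z) ^ q)

/-- Entrywise expectation of a random matrix. -/
noncomputable def Emat {d : ℕ} {Ω : Type*} [MeasurableSpace Ω] (μ : Measure Ω)
    (X : Ω → Mat d) : Mat d := fun i j => ∫ ω, X ω i j ∂μ

namespace ChebAux

open Matrix

variable {d : ℕ}

/-- Frobenius norm squared. -/
def fro (M : Matrix (Fin d) (Fin d) ℂ) : ℝ := ∑ i, ∑ j, Complex.normSq (M i j)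

def nsq (v : Fin d → ℂ) : ℝ := ∑ i, Complex.normSq (v i)

lemma fro_nonneg (M : Matrix (Fin d) (Fin d) ℂ) : 0 ≤ fro M :=
  Finset.sum_nonneg fun _ _ => Finset.sum_nonneg fun _ _ => Complex.normSq_nonneg _

lemma nsq_nonneg (v : Fin d → ℂ) : 0 ≤ nsq v :=
  Finset.sum_nonneg fun _ _ => Complex.normSq_nonneg _

lemma conj_mul_self_re (z : ℂ) : ((starRingEnd ℂ) z * z).re = Complex.normSq z := by
  simp [Complex.mul_re, Complex.normSq_apply]
  try ring

lemma dot_star_self_re (v : Fin d → ℂ) : (star v ⬝ᵥ v).re = nsq v := by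
  simp only [dotProduct, nsq, Complex.re_sum, Pi.star_apply, RCLike.star_def]
  exact Finset.sum_congr rfl fun i _ => conj_mul_self_re (v i)

lemma cs (a b : Fin d → ℂ) :
    Complex.normSq (∑ j, a j * b j) ≤
      (∑ j, Complex.normSq (a j)) * (∑ j, Complex.normSq (b j)) := by
  set x : EuclideanSpace ℂ (Fin d) := (WithLp.equiv 2 (Fin d → ℂ)).symm (star a)
  set y : EuclideanSpace ℂ (Fin d) := (WithLp.equiv 2 (Fin d → ℂ)).symm b
  have hinner : (inner ℂ x y : ℂ) = ∑ j, a j * b j := by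
    simp [x, y, PiLp.inner_apply, RCLike.inner_apply, WithLp.equiv_symm_apply, PiLp.toLp_apply]
    exact Finset.sum_congr rfl fun j _ => mul_comm _ _
  have h := norm_inner_le_norm (𝕜 := ℂ) x y
  rw [hinner] at h
  have hx : ‖x‖ ^ 2 = ∑ j, Complex.normSq (a j) := by
    rw [EuclideanSpace.norm_eq, Real.sq_sqrt (by positivity)]
    simp [x, WithLp.equiv_symm_apply, PiLp.toLp_apply, Complex.sq_norm, Complex.normSq_conj]
  have hy : ‖y‖ ^ 2 = ∑ j, Complex.normSq (b j) := by
    rw [EuclideanSpace.norm_eq, Real.sq_sqrt (by positivity)]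
    simp [y, WithLp.equiv_symm_apply, PiLp.toLp_apply, Complex.sq_norm]
  calc Complex.normSq (∑ j, a j * b j) = ‖∑ j, a j * b j‖ ^ 2 := by
        rw [Complex.sq_norm]
    _ ≤ (‖x‖ * ‖y‖) ^ 2 := by
        apply sq_le_sq' <;> nlinarith [norm_nonneg (∑ j, a j * b j), norm_nonneg x, norm_nonneg y]
    _ = (∑ j, Complex.normSq (a j)) * (∑ j, Complex.normSq (b j)) := by
        rw [mul_pow, hx, hy]

lemma re_sq_le_normSq (z : ℂ) : z.re ^ 2 ≤ Complex.normSq z := by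
  rw [Complex.normSq_apply]; nlinarith [sq_nonneg z.im]

lemma dot_re_sq_le (u v : Fin d → ℂ) : ((star u ⬝ᵥ v).re) ^ 2 ≤ nsq u * nsq v := by
  refine le_trans (re_sq_le_normSq _) ?_
  have := cs (star u) v
  simpa [dotProduct, nsq, Complex.normSq_conj] using this

lemma nsq_mulVec_le (M : Matrix (Fin d) (Fin d) ℂ) (w : Fin d → ℂ) :
    nsq (M *ᵥ w) ≤ fro M * nsq w := by
  unfold nsq fro
  rw [Finset.sum_mul]
  refine Finset.sum_le_sum fun i _ => ?_
  simpa [Matrix.mulVec, dotProduct] using cs (fun j => M i j) w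

lemma trace_conjTranspose_mul_self_re (M : Matrix (Fin d) (Fin d) ℂ) :
    (Matrix.trace (Mᴴ * M)).re = fro M := by
  simp only [Matrix.trace, Matrix.diag_apply, Matrix.mul_apply, Matrix.conjTranspose_apply,
    Complex.re_sum, fro]
  rw [Finset.sum_comm]
  exact Finset.sum_congr rfl fun i _ => Finset.sum_congr rfl fun j _ => conj_mul_self_re _


lemma arith {a x nY F : ℝ} (h1 : x ^ 2 ≤ a * nY) (h2 : nY ≤ F * a) (h3 : a < x)
    (h4 : 0 ≤ a) (h6 : 0 ≤ F) : 1 ≤ F := by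
  have hx : 0 < x := lt_of_le_of_lt h4 h3
  have ha : 0 < a := by
    rcases h4.lt_or_eq with h | h
    · exact h
    · exfalso
      rw [← h, zero_mul] at h1
      nlinarith [mul_pos hx hx]
  have k1 : x ^ 2 ≤ F * a ^ 2 := by nlinarith
  have k2 : a ^ 2 < x ^ 2 := by nlinarith
  nlinarith [mul_pos ha ha]

lemma trace_sq (X P : Matrix (Fin d) (Fin d) ℂ) (hX : Xᴴ = X) (hPh : Pᴴ = P) :
    (Matrix.trace (X * X * (P * P))).re = fro (X * P) := by
  rw [← trace_conjTranspose_mul_self_re (X * P)]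
  have h1 : (X * P)ᴴ * (X * P) = P * (X * (X * P)) := by
    rw [Matrix.conjTranspose_mul, hPh, hX]; noncomm_ring
  rw [h1, Matrix.trace_mul_comm P (X * (X * P))]
  congr 2
  noncomm_ring

lemma fro_TXT (T X : Matrix (Fin d) (Fin d) ℂ) (hX : Xᴴ = X) (hTh : Tᴴ = T) :
    fro (T * X * T) = (Matrix.trace (X * (T * T) * (X * (T * T)))).re := by
  rw [← trace_conjTranspose_mul_self_re (T * X * T)]
  have h1 : (T * X * T)ᴴ * (T * X * T) = T * ((X * (T * T) * X) * T) := by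
    rw [Matrix.conjTranspose_mul, Matrix.conjTranspose_mul, hTh, hX]; noncomm_ring
  rw [h1, Matrix.trace_mul_comm T ((X * (T * T) * X) * T)]
  congr 2
  noncomm_ring

lemma traceineq {X P : Matrix (Fin d) (Fin d) ℂ} (hX : Xᴴ = X) (hPh : Pᴴ = P) :
    (Matrix.trace (X * P * (X * P))).re ≤ (Matrix.trace (X * X * (P * P))).re := by
  set C := X * P - P * X with hC
  have hCH : Cᴴ = P * X - X * P := by
    rw [hC, Matrix.conjTranspose_sub, Matrix.conjTranspose_mul, Matrix.conjTranspose_mul,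
      hPh, hX]
  have hexp : Cᴴ * C = P * (X * (X * P)) - P * (X * (P * X)) - X * (P * (X * P))
      + X * (P * (P * X)) := by
    rw [hCH, hC]
    noncomm_ring
  have c1 : Matrix.trace (P * (X * (X * P))) = Matrix.trace (X * X * (P * P)) := by
    rw [Matrix.trace_mul_comm P (X * (X * P))]; congr 1; noncomm_ring
  have c2 : Matrix.trace (P * (X * (P * X))) = Matrix.trace (X * P * (X * P)) := by
    rw [Matrix.trace_mul_comm P (X * (P * X))]; congr 1; noncomm_ring
  have c3 : Matrix.trace (X * (P * (X * P))) = Matrix.trace (X * P * (X * P)) := by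
    congr 1; noncomm_ring
  have c4 : Matrix.trace (X * (P * (P * X))) = Matrix.trace (X * X * (P * P)) := by
    calc Matrix.trace (X * (P * (P * X))) = Matrix.trace ((P * P) * (X * X)) := by
          rw [Matrix.trace_mul_comm X (P * (P * X))]; congr 1; noncomm_ring
      _ = Matrix.trace ((X * X) * (P * P)) := Matrix.trace_mul_comm _ _
  have htr : Matrix.trace (Cᴴ * C) =
      Matrix.trace (X * X * (P * P)) + Matrix.trace (X * X * (P * P)) -
      Matrix.trace (X * P * (X * P)) - Matrix.trace (X * P * (X * P)) := by
    rw [hexp]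
    simp only [Matrix.trace_sub, Matrix.trace_add]
    rw [c1, c2, c3, c4]
    ring
  have hfroC : 0 ≤ (Matrix.trace (Cᴴ * C)).re := by
    rw [trace_conjTranspose_mul_self_re]; exact fro_nonneg _
  rw [htr] at hfroC
  simp only [Complex.sub_re, Complex.add_re] at hfroC
  linarith

lemma key {A S T X : Matrix (Fin d) (Fin d) ℂ} (hA : A.PosDef)
    (hSh : Sᴴ = S) (hSS : S * S = A) (hTS : T * S = 1) (hST : S * T = 1) (hTh : Tᴴ = T)
    (hX : X.IsHermitian) (h : ¬ (A - X).PosSemidef) :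
    1 ≤ (Matrix.trace (X * X * ((T * T) * (T * T)))).re := by
  have hAX : (A - X).IsHermitian := hA.1.sub hX
  obtain ⟨v, hv⟩ : ∃ v, ¬ (0 : ℂ) ≤ star v ⬝ᵥ ((A - X) *ᵥ v) := by
    by_contra hc
    push_neg at hc
    exact h (.of_dotProduct_mulVec_nonneg hAX hc)
  have h0A : (0 : ℂ) ≤ star v ⬝ᵥ (A *ᵥ v) := hA.posSemidef.dotProduct_mulVec_nonneg v
  set cA : ℂ := star v ⬝ᵥ (A *ᵥ v) with hcA
  set cX : ℂ := star v ⬝ᵥ (X *ᵥ v) with hcX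
  have hsub : star v ⬝ᵥ ((A - X) *ᵥ v) = cA - cX := by
    simp [Matrix.sub_mulVec, dotProduct_sub, hcA, hcX]
  have himA : cA.im = 0 := by
    have := (Complex.le_def.mp h0A).2
    simpa using this.symm
  have haA : 0 ≤ cA.re := by simpa using (Complex.le_def.mp h0A).1
  have himX : cX.im = 0 := by
    rw [← Complex.conj_eq_iff_im]
    calc (starRingEnd ℂ) cX = star (star v ⬝ᵥ X *ᵥ v) := rfl
      _ = star (X *ᵥ v) ⬝ᵥ v := by rw [star_dotProduct]; simp
      _ = (star v ᵥ* Xᴴ) ⬝ᵥ v := by rw [Matrix.star_mulVec]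
      _ = star v ⬝ᵥ (Xᴴ *ᵥ v) := by rw [Matrix.dotProduct_mulVec]
      _ = cX := by rw [hX.eq]
  have hax : cA.re < cX.re := by
    by_contra hge
    push_neg at hge
    apply hv
    rw [hsub, Complex.le_def]
    refine ⟨by simpa using hge, by simp [Complex.sub_im, himA, himX]⟩
  set w : Fin d → ℂ := S *ᵥ v with hw
  have hstarw : star w = star v ᵥ* S := by rw [hw, Matrix.star_mulVec, hSh]
  have hww : star w ⬝ᵥ w = cA := by
    rw [hstarw, hw, ← Matrix.dotProduct_mulVec, Matrix.mulVec_mulVec, hSS]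
  have hwYw : star w ⬝ᵥ ((T * X * T) *ᵥ w) = cX := by
    rw [hstarw, hw, Matrix.mulVec_mulVec]
    have h2 : T * X * T * S = T * X := by rw [mul_assoc, hTS, mul_one]
    rw [h2, ← Matrix.dotProduct_mulVec, Matrix.mulVec_mulVec, ← mul_assoc, hST, one_mul]
  have hnw : nsq w = cA.re := by rw [← dot_star_self_re, hww]
  have hcs : (cX.re) ^ 2 ≤ cA.re * nsq ((T * X * T) *ᵥ w) := by
    have h3 := dot_re_sq_le w ((T * X * T) *ᵥ w)
    rwa [hwYw, hnw] at h3
  have hfrob : nsq ((T * X * T) *ᵥ w) ≤ fro (T * X * T) * cA.re := by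
    have := nsq_mulVec_le (T * X * T) w
    rwa [hnw] at this
  have hfro1 : 1 ≤ fro (T * X * T) :=
    arith hcs hfrob hax haA (fro_nonneg _)
  calc (1 : ℝ) ≤ fro (T * X * T) := hfro1
    _ = (Matrix.trace (X * (T * T) * (X * (T * T)))).re := fro_TXT T X hX.eq hTh
    _ ≤ (Matrix.trace (X * X * ((T * T) * (T * T)))).re := traceineq hX.eq (by
        rw [Matrix.conjTranspose_mul, hTh])


lemma mpow_neg_two_mul {A : Mat d} (hA : A.PosDef) : mpow A (-2) * A * A = 1 := by
  have hsp : ∀ x ∈ spectrum ℝ A, 0 < x := by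
    rw [hA.1.spectrum_real_eq_range_eigenvalues]
    rintro x ⟨i, rfl⟩
    exact hA.eigenvalues_pos i
  have hcont : ContinuousOn (fun x : ℝ => x ^ (-2 : ℝ)) (spectrum ℝ A) := fun x hx =>
    ((Real.continuousAt_rpow_const x (-2) (Or.inl (hsp x hx).ne')).continuousWithinAt)
  have hid : cfc (fun x : ℝ => x) A = A := cfc_id' ℝ A hA.1
  have hcont2 : ContinuousOn (fun x : ℝ => x ^ (-2 : ℝ) * x) (spectrum ℝ A) :=
    hcont.mul continuousOn_id
  unfold mpow
  calc cfc (fun x : ℝ => x ^ (-2 : ℝ)) A * A * A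
      = cfc (fun x : ℝ => x ^ (-2 : ℝ)) A * cfc (fun x : ℝ => x) A * cfc (fun x : ℝ => x) A := by
        rw [hid]
    _ = cfc (fun x : ℝ => x ^ (-2 : ℝ) * x) A * cfc (fun x : ℝ => x) A := by
        rw [← cfc_mul _ _ A hcont (continuousOn_id' _)]
    _ = cfc (fun x : ℝ => x ^ (-2 : ℝ) * x * x) A := by
        rw [← cfc_mul _ _ A hcont2 (continuousOn_id' _)]
    _ = cfc (fun _ : ℝ => (1 : ℝ)) A := by
        apply cfc_congr
        intro x hx
        have hx0 : x ≠ 0 := (hsp x hx).ne'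
        show x ^ (-2 : ℝ) * x * x = 1
        have h2 : x ^ (2 : ℝ) = x * x := by
          rw [show (2 : ℝ) = ((2 : ℕ) : ℝ) by norm_num, Real.rpow_natCast]
          ring
        rw [Real.rpow_neg (hsp x hx).le, h2]
        field_simp
    _ = 1 := by
      have : (fun _ : ℝ => (1 : ℝ)) = (1 : ℝ → ℝ) := rfl
      rw [this]
      exact cfc_one ℝ A hA.1


end ChebAux

open Matrix in
/-- **Chebyshev's inequality for tensors** (Theorem 3.3). For a deterministic PD
matrix `A` and a random Hermitian matrix `X` with `X²` having integrable
entries, `ℙ(X ⋠ A) ≤ Tr(𝔼[X²]·A^{-2})`. -/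
theorem chebyshev_inequality_for_tensors {d : ℕ} (hd : 1 ≤ d)
    {Ω : Type*} [MeasurableSpace Ω] (μ : Measure Ω) [IsProbabilityMeasure μ]
    (A : Mat d) (hA : A.PosDef) (X : Ω → Mat d)
    (hherm : ∀ᵐ ω ∂μ, (X ω).IsHermitian)
    (hint : ∀ i j, Integrable (fun ω => (X ω ^ 2) i j) μ) :
    (μ {ω | ¬ (A - X ω).PosSemidef}).toReal ≤
      (Matrix.trace (Emat μ (fun ω => X ω ^ 2) * mpow A (-2))).re := by
  classical
  have hAps : A.PosSemidef := hA.posSemidef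
  open scoped MatrixOrder in
  set S := CFC.sqrt A with hSdef
  open scoped MatrixOrder in
  have hSps : S.PosSemidef := (CFC.sqrt_nonneg A).posSemidef
  have hSh : Sᴴ = S := hSps.1
  open scoped MatrixOrder in
  have hSS : S * S = A := CFC.sqrt_mul_sqrt_self A hAps.nonneg
  have hdetA : A.det ≠ 0 := hA.det_pos.ne'
  have hdetS : IsUnit S.det := by
    have hm : S.det * S.det = A.det := by rw [← Matrix.det_mul, hSS]
    refine isUnit_iff_ne_zero.mpr fun h0 => hdetA ?_
    rw [← hm, h0, mul_zero]
  set T := S⁻¹ with hTdef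
  have hTS : T * S = 1 := Matrix.nonsing_inv_mul S hdetS
  have hST : S * T = 1 := Matrix.mul_nonsing_inv S hdetS
  have hTh : Tᴴ = T := by rw [hTdef, Matrix.conjTranspose_nonsing_inv, hSh]
  have hP1 : (T * T) * A = 1 := by
    rw [← hSS, show (T * T) * (S * S) = T * ((T * S) * S) from by noncomm_ring, hTS,
      one_mul, hTS]
  have hPP : ((T * T) * (T * T)) * (A * A) = 1 := by
    rw [show ((T * T) * (T * T)) * (A * A) = (T * T) * (((T * T) * A) * A) from by
      noncomm_ring, hP1, one_mul, hP1]
  have hB : mpow A (-2) = (T * T) * (T * T) := by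
    refine Matrix.left_inv_eq_left_inv ?_ hPP
    rw [← mul_assoc]
    exact ChebAux.mpow_neg_two_mul hA
  rw [hB]
  have trace_expand : ∀ M : Mat d, Matrix.trace (M * ((T * T) * (T * T))) =
      ∑ i, ∑ j, M i j * ((T * T) * (T * T)) j i := by
    intro M
    simp [Matrix.trace, Matrix.diag, Matrix.mul_apply]
  have hci : Integrable (fun ω => Matrix.trace (X ω ^ 2 * ((T * T) * (T * T)))) μ := by
    simp only [trace_expand]
    refine integrable_finset_sum _ fun i _ => integrable_finset_sum _ fun j _ => ?_
    exact (hint i j).mul_const _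
  have hgi : Integrable (fun ω => (Matrix.trace (X ω ^ 2 * ((T * T) * (T * T)))).re) μ := by
    simpa using hci.re
  have hint_eq : ∫ ω, (Matrix.trace (X ω ^ 2 * ((T * T) * (T * T)))).re ∂μ =
      (Matrix.trace (Emat μ (fun ω => X ω ^ 2) * ((T * T) * (T * T)))).re := by
    have h1 : ∫ ω, (Matrix.trace (X ω ^ 2 * ((T * T) * (T * T)))).re ∂μ =
        (∫ ω, Matrix.trace (X ω ^ 2 * ((T * T) * (T * T))) ∂μ).re := by
      simpa using integral_re hci
    rw [h1]
    congr 1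
    rw [trace_expand (Emat μ fun ω => X ω ^ 2)]
    simp only [trace_expand]
    rw [integral_finset_sum _ (fun i _ =>
      integrable_finset_sum _ (fun j _ => (hint i j).mul_const _))]
    refine Finset.sum_congr rfl fun i _ => ?_
    rw [integral_finset_sum _ (fun j _ => (hint i j).mul_const _)]
    refine Finset.sum_congr rfl fun j _ => ?_
    rw [integral_mul_const]
    rfl
  have hpt : ∀ ω, (X ω).IsHermitian → ¬ (A - X ω).PosSemidef →
      1 ≤ (Matrix.trace (X ω ^ 2 * ((T * T) * (T * T)))).re := by
    intro ω hh hn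
    rw [pow_two]
    exact ChebAux.key hA hSh hSS hTS hST hTh hh hn
  have hnn : ∀ ω, (X ω).IsHermitian →
      0 ≤ (Matrix.trace (X ω ^ 2 * ((T * T) * (T * T)))).re := by
    intro ω hh
    rw [pow_two,
      ChebAux.trace_sq (X ω) (T * T) hh.eq (by rw [Matrix.conjTranspose_mul, hTh])]
    exact ChebAux.fro_nonneg _
  have hgae : 0 ≤ᵐ[μ] fun ω => (Matrix.trace (X ω ^ 2 * ((T * T) * (T * T)))).re :=
    hherm.mono fun ω hω => hnn ω hω
  have hmar := mul_meas_ge_le_integral_of_nonneg hgae hgi 1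
  rw [one_mul] at hmar
  have hsubset : μ {ω | ¬ (A - X ω).PosSemidef} ≤
      μ {ω | (1:ℝ) ≤ (Matrix.trace (X ω ^ 2 * ((T * T) * (T * T)))).re} := by
    have hstep : {ω | ¬ (A - X ω).PosSemidef} ⊆
        {ω | (1:ℝ) ≤ (Matrix.trace (X ω ^ 2 * ((T * T) * (T * T)))).re} ∪
        {ω | ¬ (X ω).IsHermitian} := by
      intro ω hω
      by_cases hh : (X ω).IsHermitian
      · exact Or.inl (hpt ω hh hω)
      · exact Or.inr hh
    refine le_trans (measure_mono hstep) ?_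
    refine le_trans (measure_union_le _ _) ?_
    rw [ae_iff.mp hherm, add_zero]
  calc (μ {ω | ¬ (A - X ω).PosSemidef}).toReal
      ≤ (μ {ω | (1:ℝ) ≤ (Matrix.trace (X ω ^ 2 * ((T * T) * (T * T)))).re}).toReal :=
        ENNReal.toReal_mono (measure_ne_top μ _) hsubset
    _ ≤ ∫ ω, (Matrix.trace (X ω ^ 2 * ((T * T) * (T * T)))).re ∂μ := by
          rw [← measureReal_def]; exact hmar
    _ = _ := hint_eq
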